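/- Fix the SmoothBoost weights as defined in the context, with γ ∈ (0,1/2), margin parameter θ = γ/(2+γ), and κ ∈ (0,1). Suppose that for every t ∈ {1,…,T}: (a) ∑_{i: h_t(x_i) ≠ y_i} D_i^t ≤ 1/2 − γ (the weak-learning condition), and (b) ∑_{i=1}^m M_i^t ≥ κm (the non-termination condition). Then T < 2/(κ·γ²·√(1−γ)). -/

import Mathlib

lemma exp_taylor4_le {x : ℝ} (h0 : 0 ≤ x) (h1 : x ≤ 1) :
    Real.exp x ≤ 1 + x + x^2/2 + x^3/6 + 5*x^4/96 := by
  have h := Real.exp_bound (n := 4) (by rw [abs_of_nonneg h0]; exact h1) (by norm_num)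
  rw [abs_of_nonneg h0] at h
  have hs : ∑ m ∈ Finset.range 4, x ^ m / m.factorial = 1 + x + x^2/2 + x^3/6 := by
    simp [Finset.sum_range_succ, Nat.factorial]
  rw [hs] at h
  have h3 := (abs_sub_le_iff.1 h).1
  norm_num [Nat.factorial] at h3
  nlinarith [h3]

lemma exp_neg_taylor4_le {x : ℝ} (h0 : 0 ≤ x) (h1 : x ≤ 1) :
    Real.exp (-x) ≤ 1 - x + x^2/2 - x^3/6 + 5*x^4/96 := by
  have h := Real.exp_bound (n := 4) (x := -x) (by rw [abs_neg, abs_of_nonneg h0]; exact h1)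
    (by norm_num)
  rw [abs_neg, abs_of_nonneg h0] at h
  have hs : ∑ m ∈ Finset.range 4, (-x) ^ m / m.factorial = 1 - x + x^2/2 - x^3/6 := by
    simp [Finset.sum_range_succ, Nat.factorial]
    ring
  rw [hs] at h
  have h3 := (abs_sub_le_iff.1 h).1
  norm_num [Nat.factorial] at h3
  nlinarith [h3]

lemma log_one_sub_le_aux {γ : ℝ} (h0 : 0 < γ) (h1 : γ < 1/2) :
    Real.log (1 - γ) ≤ -(γ + γ^2/2) := by
  have hu0 : (0:ℝ) ≤ γ + γ^2/2 := by positivity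
  have hu1 : γ + γ^2/2 ≤ 1 := by nlinarith
  have hE := exp_taylor4_le hu0 hu1
  have hprod : (1 - γ) * Real.exp (γ + γ^2/2) ≤ 1 := by
    have h2 : (1 - γ) * (1 + (γ + γ^2/2) + (γ + γ^2/2)^2/2 + (γ + γ^2/2)^3/6
        + 5*(γ + γ^2/2)^4/96) ≤ 1 := by
      nlinarith [pow_pos h0 3, pow_pos h0 4, pow_pos h0 5, pow_pos h0 6, pow_pos h0 7,
        pow_pos h0 8, pow_pos h0 9]
    nlinarith [Real.exp_pos (γ + γ^2/2)]
  have hpos : (0:ℝ) < (1 - γ) * Real.exp (γ + γ^2/2) := by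
    have : (0:ℝ) < 1 - γ := by linarith
    positivity
  have hlog := Real.log_le_sub_one_of_pos hpos
  rw [Real.log_mul (by linarith) (Real.exp_ne_zero _), Real.log_exp] at hlog
  linarith

lemma neg_log_one_sub_le_aux {γ : ℝ} (h0 : 0 < γ) (h1 : γ < 1/2) :
    -(γ + γ^2/2 + γ^3) ≤ Real.log (1 - γ) := by
  have hv0 : (0:ℝ) ≤ γ + γ^2/2 + γ^3 := by positivity
  have hv1 : γ + γ^2/2 + γ^3 ≤ 1 := by nlinarith
  have hE := exp_neg_taylor4_le hv0 hv1
  have hle : Real.exp (-(γ + γ^2/2 + γ^3)) ≤ 1 - γ := by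
    have h2 : 1 - (γ + γ^2/2 + γ^3) + (γ + γ^2/2 + γ^3)^2/2 - (γ + γ^2/2 + γ^3)^3/6
        + 5*(γ + γ^2/2 + γ^3)^4/96 ≤ 1 - γ := by
      nlinarith [pow_pos h0 3, pow_pos h0 4, pow_pos h0 5, pow_pos h0 6, pow_pos h0 7,
        pow_pos h0 8, pow_pos h0 9, pow_pos h0 10, pow_pos h0 11, pow_pos h0 12,
        mul_nonneg (mul_nonneg (pow_nonneg h0.le 3) h0.le) (by linarith : (0:ℝ) ≤ 1/2 - γ),
        mul_nonneg (mul_nonneg (pow_nonneg h0.le 4) h0.le) (by linarith : (0:ℝ) ≤ 1/2 - γ),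
        mul_nonneg (mul_nonneg (pow_nonneg h0.le 5) h0.le) (by linarith : (0:ℝ) ≤ 1/2 - γ)]
    linarith
  calc -(γ + γ^2/2 + γ^3) = Real.log (Real.exp (-(γ + γ^2/2 + γ^3))) := by rw [Real.log_exp]
    _ ≤ Real.log (1 - γ) := Real.log_le_log (Real.exp_pos _) hle

set_option maxHeartbeats 1000000 in
lemma poly_core {γ : ℝ} (hγ0 : 0 < γ) (hγ1 : γ < 1/2) :
    γ^2*(1-γ/2)/2 ≤ (γ/2 + γ^2/4)*(1-γ/2)*(1-(γ/2 + γ^2/4 + γ^3/2))*(1/2+γ)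
        - ((γ/2 + γ^2/4 + γ^3/2)*(1+γ/2) + ((γ/2 + γ^2/4 + γ^3/2)*(1+γ/2))^2/2
        + ((γ/2 + γ^2/4 + γ^3/2)*(1+γ/2))^3)*(1/2-γ) := by
  nlinarith [pow_pos hγ0 2, pow_pos hγ0 4, pow_pos hγ0 5, pow_pos hγ0 6, pow_pos hγ0 7,
    pow_pos hγ0 8, pow_pos hγ0 9, pow_pos hγ0 10, pow_pos hγ0 11, pow_pos hγ0 12,
    pow_pos hγ0 13]

set_option maxHeartbeats 2000000 in
lemma key_scalar {γ L θ : ℝ} (hγ0 : 0 < γ) (hγ1 : γ < 1/2)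
    (hL0 : 0 < L) (hLl : γ/2 + γ^2/4 ≤ L) (hLu : L ≤ γ/2 + γ^2/4 + γ^3/2)
    (hθ0 : 0 < θ) (hθγ : θ ≤ γ/2) :
    γ^2 * Real.sqrt (1-γ) / 2 ≤
      (L*(1-θ)*Real.exp (-(L*(1-θ))))*(1/2+γ) - (Real.exp (L*(1+θ))-1)*(1/2-γ) := by
  have hb : (0:ℝ) < 1 - γ := by linarith
  have hdp0 : 0 < 1 - θ := by linarith
  have hsqle : Real.sqrt (1-γ) ≤ 1 - γ/2 := by
    rw [show (1:ℝ) - γ/2 = Real.sqrt ((1-γ/2)^2) from (Real.sqrt_sq (by linarith)).symm]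
    apply Real.sqrt_le_sqrt; nlinarith
  have e1 : 1 - L*(1-θ) ≤ Real.exp (-(L*(1-θ))) := by
    have := Real.add_one_le_exp (-(L*(1-θ))); linarith
  have e2 : L*(1-θ) ≤ γ/2 + γ^2/4 + γ^3/2 := by nlinarith
  have e3 : (γ/2 + γ^2/4)*(1-γ/2) ≤ L*(1-θ) := by
    apply mul_le_mul hLl (by linarith) (by linarith) hL0.le
  have e4 : (0:ℝ) ≤ 1 - (γ/2 + γ^2/4 + γ^3/2) := by nlinarith
  have p1 : (0:ℝ) ≤ L*(1-θ) := by positivity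
  have q1 : L*(1-θ)*(1 - L*(1-θ)) ≤ L*(1-θ)*Real.exp (-(L*(1-θ))) :=
    mul_le_mul_of_nonneg_left e1 p1
  have q2 : (γ/2 + γ^2/4)*(1-γ/2)*(1-(γ/2 + γ^2/4 + γ^3/2)) ≤ L*(1-θ)*(1-L*(1-θ)) :=
    mul_le_mul e3 (by linarith) e4 p1
  have hLupos : (0:ℝ) ≤ γ/2 + γ^2/4 + γ^3/2 := by positivity
  have f1 : L*(1+θ) ≤ (γ/2 + γ^2/4 + γ^3/2)*(1+γ/2) := by
    apply mul_le_mul hLu (by linarith) (by linarith) hLupos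
  have hX0 : (0:ℝ) ≤ (γ/2 + γ^2/4 + γ^3/2)*(1+γ/2) := by positivity
  have hX1 : (γ/2 + γ^2/4 + γ^3/2)*(1+γ/2) ≤ 1 := by nlinarith
  have f2 : Real.exp (L*(1+θ)) ≤ Real.exp ((γ/2 + γ^2/4 + γ^3/2)*(1+γ/2)) :=
    Real.exp_le_exp.2 f1
  have f3 := exp_taylor4_le hX0 hX1
  have q3 : Real.exp (L*(1+θ)) - 1 ≤ (γ/2 + γ^2/4 + γ^3/2)*(1+γ/2)
      + ((γ/2 + γ^2/4 + γ^3/2)*(1+γ/2))^2/2 + ((γ/2 + γ^2/4 + γ^3/2)*(1+γ/2))^3 := by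
    nlinarith [pow_nonneg hX0 3, mul_le_mul_of_nonneg_left hX1 (pow_nonneg hX0 3)]
  have hA : (γ/2 + γ^2/4)*(1-γ/2)*(1-(γ/2 + γ^2/4 + γ^3/2)) ≤ L*(1-θ)*Real.exp (-(L*(1-θ))) :=
    le_trans q2 q1
  have c1 := mul_le_mul_of_nonneg_right hA (by linarith : (0:ℝ) ≤ 1/2+γ)
  have c2 := mul_le_mul_of_nonneg_right q3 (by linarith : (0:ℝ) ≤ 1/2-γ)
  have c3 := poly_core hγ0 hγ1
  have c4 : γ^2 * Real.sqrt (1-γ) / 2 ≤ γ^2*(1-γ/2)/2 := by nlinarith [pow_pos hγ0 2]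
  linarith

lemma exp_neg_one_add_le (x : ℝ) : Real.exp (-x) * (1 + x) ≤ 1 := by
  have h1 := Real.add_one_le_exp x
  have h2 : Real.exp (-x) * Real.exp x = 1 := by rw [← Real.exp_add]; simp
  nlinarith [Real.exp_pos (-x), mul_le_mul_of_nonneg_left h1 (Real.exp_pos (-x)).le]

-- Φ(n) = exp(-(L * max n 0)) + L * max (-n) 0 ; G(n) = exp(-(L * max n 0))
lemma stepA {L d : ℝ} (hL0 : 0 < L) (hd0 : 0 < d) (hd1 : d ≤ 1) (n : ℝ) :
    L * d * Real.exp (-(L*d)) * Real.exp (-(L * max n 0)) ≤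
      (Real.exp (-(L * max n 0)) + L * max (-n) 0)
      - (Real.exp (-(L * max (n+d) 0)) + L * max (-(n+d)) 0) := by
  have hexp1 : Real.exp (-(L*d)) ≤ 1 := by
    rw [show (1:ℝ) = Real.exp 0 from Real.exp_zero.symm]
    apply Real.exp_le_exp.2; nlinarith
  rcases le_or_gt 0 n with hn | hn
  · rw [max_eq_left hn, max_eq_left (by linarith : (0:ℝ) ≤ n + d),
      max_eq_right (by linarith : -n ≤ (0:ℝ)), max_eq_right (by linarith : -(n+d) ≤ (0:ℝ))]
    have hsplit : Real.exp (-(L*(n+d))) = Real.exp (-(L*n)) * Real.exp (-(L*d)) := by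
      rw [← Real.exp_add]; ring_nf
    have key := exp_neg_one_add_le (L*d)
    have hE := Real.exp_pos (-(L*n))
    nlinarith [mul_le_mul_of_nonneg_left key hE.le]
  · rcases le_or_gt (n + d) 0 with hnd | hnd
    · rw [max_eq_right hn.le, max_eq_right hnd,
        max_eq_left (by linarith : (0:ℝ) ≤ -n), max_eq_left (by linarith : (0:ℝ) ≤ -(n+d))]
      simp only [mul_zero, neg_zero, Real.exp_zero]
      nlinarith [mul_pos hL0 hd0]
    · rw [max_eq_right hn.le, max_eq_left hnd.le,
        max_eq_left (by linarith : (0:ℝ) ≤ -n), max_eq_right (by linarith : -(n+d) ≤ (0:ℝ))]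
      simp only [mul_zero, neg_zero, Real.exp_zero]
      set z : ℝ := L * (n + d) with hz
      have hz0 : 0 < z := by rw [hz]; positivity
      have hzd : z ≤ L * d := by rw [hz]; nlinarith
      have k1 := exp_neg_one_add_le z
      have k2 : Real.exp (-(L*d)) ≤ Real.exp (-z) := Real.exp_le_exp.2 (by linarith)
      have k3 : Real.exp (-z) ≤ 1 := by
        rw [show (1:ℝ) = Real.exp 0 from Real.exp_zero.symm]
        apply Real.exp_le_exp.2; linarith
      have t1 : z * Real.exp (-(L*d)) ≤ z * Real.exp (-z) :=
        mul_le_mul_of_nonneg_left k2 hz0.le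
      have t2 : z * Real.exp (-z) ≤ 1 - Real.exp (-z) := by nlinarith
      have t3 : (L*d - z) * Real.exp (-(L*d)) ≤ L*d - z := by nlinarith
      have hLn : L * -n = L*d - z := by rw [hz]; ring
      nlinarith [hLn]

lemma stepB {L d : ℝ} (hL0 : 0 < L) (hd0 : 0 < d) (n : ℝ) :
    (Real.exp (-(L * max (n-d) 0)) + L * max (-(n-d)) 0)
      - (Real.exp (-(L * max n 0)) + L * max (-n) 0) ≤
      (Real.exp (L*d) - 1) * Real.exp (-(L * max n 0)) := by
  rcases le_or_gt d n with hn | hn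
  · rw [max_eq_left (by linarith : (0:ℝ) ≤ n), max_eq_left (by linarith : (0:ℝ) ≤ n - d),
      max_eq_right (by linarith : -n ≤ (0:ℝ)), max_eq_right (by linarith : -(n-d) ≤ (0:ℝ))]
    have hsplit : Real.exp (-(L*(n-d))) = Real.exp (L*d) * Real.exp (-(L*n)) := by
      rw [← Real.exp_add]; ring_nf
    nlinarith [hsplit]
  · rcases le_or_gt n 0 with hn0 | hn0
    · rw [max_eq_right hn0, max_eq_right (by linarith : n - d ≤ (0:ℝ)),
        max_eq_left (by linarith : (0:ℝ) ≤ -n), max_eq_left (by linarith : (0:ℝ) ≤ -(n-d))]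
      simp only [mul_zero, neg_zero, Real.exp_zero]
      have := Real.add_one_le_exp (L*d)
      nlinarith
    · rw [max_eq_left hn0.le, max_eq_right (by linarith : n - d ≤ (0:ℝ)),
        max_eq_right (by linarith : -n ≤ (0:ℝ)), max_eq_left (by linarith : (0:ℝ) ≤ -(n-d))]
      simp only [mul_zero, neg_zero, Real.exp_zero]
      have hid : Real.exp (L*d) * Real.exp (-(L*n)) = Real.exp (L*(d-n)) := by
        rw [← Real.exp_add]; ring_nf
      have := Real.add_one_le_exp (L*(d-n))
      nlinarith [hid]

set_option maxHeartbeats 1000000 in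
/-- Bound on the number of iterations of SmoothBoost (Claim 2 / Theorem 3 of
Servedio): with `γ ∈ (0,1/2)`, `θ = γ/(2+γ)` and `κ ∈ (0,1)`, if for every
`t ∈ {1,…,T}` the weak-learning condition `∑_{i : h_t(x_i) ≠ y_i} D_i^t ≤ 1/2 − γ`
and the non-termination condition `∑_{i=1}^m M_i^t ≥ κm` hold, then
`T < 2/(κγ²√(1−γ))`. -/
theorem smoothboost_iteration_bound
    {X : Type*} (m : ℕ) (hm : 1 ≤ m)
    (x : Fin m → X) (y : Fin m → ℝ) (hy : ∀ i, y i = 1 ∨ y i = -1)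
    (γ θ κ : ℝ) (hγ : γ ∈ Set.Ioo (0 : ℝ) (1/2)) (hθ : θ = γ / (2 + γ))
    (hκ : κ ∈ Set.Ioo (0 : ℝ) 1)
    (h : ℕ → X → ℝ) (hh : ∀ t z, h t z = 1 ∨ h t z = -1)
    (N M : ℕ → Fin m → ℝ)
    (hN0 : ∀ i, N 0 i = 0)
    (hN : ∀ t, 1 ≤ t → ∀ i, N t i = N (t - 1) i + h t (x i) * y i - θ)
    (hM1 : ∀ i, M 1 i = 1)
    (hM : ∀ t, 1 ≤ t → ∀ i,
      M (t + 1) i = if N t i < 0 then 1 else (1 - γ) ^ (N t i / 2))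
    (T : ℕ)
    (hweak : ∀ t ∈ Finset.Icc 1 T,
      ∑ i ∈ Finset.univ.filter (fun i => h t (x i) ≠ y i),
          M t i / ∑ j, M t j ≤ 1/2 - γ)
    (hnoterm : ∀ t ∈ Finset.Icc 1 T, κ * m ≤ ∑ i, M t i) :
    (T : ℝ) < 2 / (κ * γ^2 * Real.sqrt (1 - γ)) := by
  obtain ⟨hγ0, hγ1⟩ := hγ
  obtain ⟨hκ0, hκ1⟩ := hκ
  have hb : (0:ℝ) < 1 - γ := by linarith
  have hb1 : 1 - γ < 1 := by linarith
  obtain ⟨L, hLdef⟩ : ∃ L : ℝ, L = -Real.log (1 - γ) / 2 := ⟨_, rfl⟩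
  have hlogeq : Real.log (1 - γ) = -(2*L) := by rw [hLdef]; ring
  have hL0 : 0 < L := by
    have := Real.log_neg hb hb1
    rw [hLdef]; linarith
  have hLl : γ/2 + γ^2/4 ≤ L := by
    have := log_one_sub_le_aux hγ0 hγ1
    rw [hLdef]; linarith
  have hLu : L ≤ γ/2 + γ^2/4 + γ^3/2 := by
    have := neg_log_one_sub_le_aux hγ0 hγ1
    rw [hLdef]; linarith
  have hθ0 : 0 < θ := by rw [hθ]; positivity
  have hθγ : θ ≤ γ/2 := by
    rw [hθ, div_le_div_iff₀ (by linarith) (by norm_num)]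
    nlinarith
  have hθ1 : θ < 1 := by linarith
  obtain ⟨G, hG⟩ : ∃ G : ℝ → ℝ, G = fun n => Real.exp (-(L * max n 0)) := ⟨_, rfl⟩
  obtain ⟨Φ, hPhi⟩ : ∃ Φ : ℝ → ℝ, Φ = fun n => G n + L * max (-n) 0 := ⟨_, rfl⟩
  have hGpos : ∀ n, 0 < G n := fun n => by rw [hG]; exact Real.exp_pos _
  have hΦpos : ∀ n, 0 < Φ n := by
    intro n
    have h1 := hGpos n
    have h2 : 0 ≤ L * max (-n) 0 := mul_nonneg hL0.le (le_max_right _ _)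
    rw [hPhi]
    dsimp only
    linarith
  obtain ⟨a0, ha0⟩ : ∃ a : ℝ, a = L * (1-θ) * Real.exp (-(L*(1-θ))) := ⟨_, rfl⟩
  obtain ⟨b0, hb0def⟩ : ∃ b : ℝ, b = Real.exp (L*(1+θ)) - 1 := ⟨_, rfl⟩
  have ha0pos : 0 < a0 := by
    have := Real.exp_pos (-(L*(1-θ)))
    have h1 : 0 < 1 - θ := by linarith
    rw [ha0]; positivity
  have hb0pos : 0 < b0 := by
    have h1 : 0 < L * (1+θ) := by positivity
    rw [hb0def]
    nlinarith [Real.add_one_le_exp (L*(1+θ))]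
  obtain ⟨c0, hc0def⟩ : ∃ c : ℝ, c = a0*(1/2+γ) - b0*(1/2-γ) := ⟨_, rfl⟩
  have hsq0 : 0 < Real.sqrt (1-γ) := Real.sqrt_pos.2 hb
  have hc0key : γ^2 * Real.sqrt (1-γ) / 2 ≤ c0 := by
    rw [hc0def, ha0, hb0def]
    exact key_scalar hγ0 hγ1 hL0 hLl hLu hθ0 hθγ
  have hc0pos : 0 < c0 := lt_of_lt_of_le (by positivity) hc0key
  -- identification of the weights
  have hMG : ∀ t, 1 ≤ t → ∀ i, M t i = G (N (t-1) i) := by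
    intro t ht i
    rcases t with _ | s
    · omega
    rcases s with _ | s'
    · rw [hM1 i]
      rw [hG]
      simp only [Nat.sub_self, hN0 i]
      simp
    · have hs1 : 1 ≤ s' + 1 := by omega
      rw [show s' + 1 + 1 - 1 = s' + 1 from rfl, hM (s'+1) hs1 i, hG]
      dsimp only
      split_ifs with hneg
      · rw [max_eq_right (le_of_lt hneg)]
        simp
      · push_neg at hneg
        rw [max_eq_left hneg, Real.rpow_def_of_pos hb, hlogeq]
        congr 1
        ring
  -- nonemptiness
  have hne : (Finset.univ : Finset (Fin m)).Nonempty := ⟨⟨0, by omega⟩, Finset.mem_univ _⟩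
  have hm0 : (0:ℝ) < m := by exact_mod_cast Nat.pos_of_ne_zero (by omega)
  -- the per-round decrease
  have hstep : ∀ t, 1 ≤ t → t ≤ T →
      ∑ i, Φ (N t i) ≤ (∑ i, Φ (N (t-1) i)) - c0 * (κ * m) := by
    intro t ht1 ht2
    have htI : t ∈ Finset.Icc 1 T := Finset.mem_Icc.2 ⟨ht1, ht2⟩
    have hMt : ∀ i, M t i = G (N (t-1) i) := hMG t ht1
    have hMtpos : ∀ i : Fin m, 0 < M t i := fun i => by rw [hMt]; exact hGpos _
    have hS0 : 0 < ∑ j, M t j := Finset.sum_pos (fun j _ => hMtpos j) hne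
    have hWsum : ∑ i ∈ Finset.univ.filter (fun i => h t (x i) ≠ y i), M t i
        ≤ (1/2 - γ) * ∑ j, M t j := by
      have hw := hweak t htI
      rw [← Finset.sum_div, div_le_iff₀ hS0] at hw
      linarith
    have hWnonneg : 0 ≤ ∑ i ∈ Finset.univ.filter (fun i => h t (x i) ≠ y i), M t i :=
      Finset.sum_nonneg (fun i _ => (hMtpos i).le)
    have hcor : ∀ i, ¬(h t (x i) ≠ y i) → Φ (N t i) ≤ Φ (N (t-1) i) - a0 * M t i := by
      intro i hi
      push_neg at hi
      have hhy : h t (x i) * y i = 1 := by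
        rcases hy i with h1 | h1 <;> rw [hi, h1] <;> norm_num
      have hNt : N t i = N (t-1) i + (1-θ) := by rw [hN t ht1 i, hhy]; ring
      rw [hNt, hMt]
      have hsA := stepA hL0 (by linarith : (0:ℝ) < 1-θ) (by linarith) (N (t-1) i)
      rw [hPhi, hG]
      dsimp only
      rw [ha0]
      linarith
    have hwrg : ∀ i, h t (x i) ≠ y i → Φ (N t i) ≤ Φ (N (t-1) i) + b0 * M t i := by
      intro i hi
      have hhy : h t (x i) * y i = -1 := by
        rcases hy i with h1 | h1 <;> rcases hh t (x i) with h2 | h2 <;>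
          rw [h1] at hi ⊢ <;> rw [h2] at hi ⊢ <;> norm_num at hi <;> norm_num
      have hNt : N t i = N (t-1) i - (1+θ) := by rw [hN t ht1 i, hhy]; ring
      rw [hNt, hMt]
      have hsB := stepB hL0 (by linarith : (0:ℝ) < 1+θ) (N (t-1) i)
      rw [hPhi, hG]
      dsimp only
      rw [hb0def]
      linarith
    -- sum over the two parts
    have hsplit1 := Finset.sum_filter_add_sum_filter_not Finset.univ
      (fun i => h t (x i) ≠ y i) (fun i => Φ (N t i))
    have hsplit2 := Finset.sum_filter_add_sum_filter_not Finset.univ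
      (fun i => h t (x i) ≠ y i) (fun i => Φ (N (t-1) i))
    have hsplit3 := Finset.sum_filter_add_sum_filter_not Finset.univ
      (fun i => h t (x i) ≠ y i) (fun i => M t i)
    have d1 : ∑ i ∈ Finset.univ.filter (fun i => h t (x i) ≠ y i),
        (Φ (N (t-1) i) + b0 * M t i)
        = (∑ i ∈ Finset.univ.filter (fun i => h t (x i) ≠ y i), Φ (N (t-1) i))
          + ∑ i ∈ Finset.univ.filter (fun i => h t (x i) ≠ y i), b0 * M t i :=
      Finset.sum_add_distrib
    have d2 : ∑ i ∈ Finset.univ.filter (fun i => h t (x i) ≠ y i), b0 * M t i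
        = b0 * ∑ i ∈ Finset.univ.filter (fun i => h t (x i) ≠ y i), M t i :=
      (Finset.mul_sum _ _ _).symm
    have d3 : ∑ i ∈ Finset.univ.filter (fun i => ¬(h t (x i) ≠ y i)),
        (Φ (N (t-1) i) - a0 * M t i)
        = (∑ i ∈ Finset.univ.filter (fun i => ¬(h t (x i) ≠ y i)), Φ (N (t-1) i))
          - ∑ i ∈ Finset.univ.filter (fun i => ¬(h t (x i) ≠ y i)), a0 * M t i :=
      Finset.sum_sub_distrib _ _
    have d4 : ∑ i ∈ Finset.univ.filter (fun i => ¬(h t (x i) ≠ y i)), a0 * M t i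
        = a0 * ∑ i ∈ Finset.univ.filter (fun i => ¬(h t (x i) ≠ y i)), M t i :=
      (Finset.mul_sum _ _ _).symm
    have h1 : ∑ i ∈ Finset.univ.filter (fun i => h t (x i) ≠ y i), Φ (N t i)
        ≤ ∑ i ∈ Finset.univ.filter (fun i => h t (x i) ≠ y i), (Φ (N (t-1) i) + b0 * M t i) :=
      Finset.sum_le_sum (fun i hiW => hwrg i (Finset.mem_filter.1 hiW).2)
    have h2 : ∑ i ∈ Finset.univ.filter (fun i => ¬(h t (x i) ≠ y i)), Φ (N t i)
        ≤ ∑ i ∈ Finset.univ.filter (fun i => ¬(h t (x i) ≠ y i)),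
            (Φ (N (t-1) i) - a0 * M t i) :=
      Finset.sum_le_sum (fun i hiW => hcor i (Finset.mem_filter.1 hiW).2)
    have hS : κ * m ≤ ∑ j, M t j := hnoterm t htI
    have e1 : (a0+b0) * (∑ i ∈ Finset.univ.filter (fun i => h t (x i) ≠ y i), M t i)
        ≤ (a0+b0) * ((1/2-γ) * ∑ j, M t j) :=
      mul_le_mul_of_nonneg_left hWsum (by linarith)
    have e2 : c0 * (κ*m) ≤ c0 * ∑ j, M t j := mul_le_mul_of_nonneg_left hS hc0pos.le
    have r2 : (a0+b0)*((1/2-γ) * ∑ j, M t j) - a0 * (∑ j, M t j)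
        = -(c0 * (∑ j, M t j)) := by rw [hc0def]; ring
    have g1 : b0 * (∑ i ∈ Finset.univ.filter (fun i => h t (x i) ≠ y i), M t i)
        - a0 * (∑ i ∈ Finset.univ.filter (fun i => ¬(h t (x i) ≠ y i)), M t i)
        = (a0+b0) * (∑ i ∈ Finset.univ.filter (fun i => h t (x i) ≠ y i), M t i)
          - a0 * (∑ j, M t j) := by
      rw [← hsplit3]; ring
    linarith [h1, h2, hsplit1, hsplit2, d1, d2, d3, d4, e1, e2, r2, g1]
  -- iterate
  have hΦ0 : Φ 0 = 1 := by rw [hPhi, hG]; simp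
  have hiter : ∀ t, t ≤ T → ∑ i, Φ (N t i) ≤ (m:ℝ) - t * (c0 * (κ * m)) := by
    intro t
    induction t with
    | zero =>
      intro _
      simp only [hN0, hΦ0, Finset.sum_const, Finset.card_univ, Fintype.card_fin,
        nsmul_eq_mul, mul_one, Nat.cast_zero, zero_mul]
      linarith
    | succ s ih =>
      intro hsT
      have h1 := hstep (s+1) (by omega) hsT
      have h2 := ih (by omega)
      rw [show s + 1 - 1 = s from rfl] at h1
      push_cast
      nlinarith [h1, h2]
  -- conclude
  have hsum_pos : 0 < ∑ i, Φ (N T i) := Finset.sum_pos (fun i _ => hΦpos _) hne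
  have hT := hiter T le_rfl
  have hTlt : (T:ℝ) * (c0 * (κ * m)) < m := by linarith
  have hTc : (T:ℝ) * (c0 * κ) < 1 := by
    nlinarith [hTlt, hm0]
  have hdenom : 0 < κ * γ^2 * Real.sqrt (1-γ) := by positivity
  rw [lt_div_iff₀ hdenom]
  have h5 : (T:ℝ) * (κ * (γ^2 * Real.sqrt (1-γ))) ≤ (T:ℝ) * (κ * (2*c0)) := by
    apply mul_le_mul_of_nonneg_left _ (Nat.cast_nonneg T)
    apply mul_le_mul_of_nonneg_left _ hκ0.le
    linarith [hc0key]
  nlinarith [hTc, h5]
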